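/- arXiv:2405.06816 — 2 statements merged into one kernel-verified Lean document; each statement's English description precedes it below -/
import Mathlib

section
/- (Lemma 1.) Let P and Q be probability measures on a measurable space X × Y and let h be a classifier whose loss function L satisfies 0 ≤ L(h(x), y) ≤ C for all (x, y). Then the expected error of h under P is bounded by ε_P(h) ≤ ε_Q(h) + √2 · C · (D_JS(P ‖ Q))^{1/2}. -/
open MeasureTheory
open scoped ENNReal

open Classical in
/-- Kullback–Leibler divergence `D_KL(P ‖ Q)`, valued in `ℝ≥0∞`:
it is `∫ log (dP/dQ) dP` when `P ≪ Q` and the log-likelihood ratio is integrable,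
and `∞` otherwise. -/
noncomputable def klDiv {α : Type*} [MeasurableSpace α] (P Q : Measure α) : ℝ≥0∞ :=
  if P ≪ Q ∧ Integrable (llr P Q) P then ENNReal.ofReal (∫ x, llr P Q x ∂P) else ⊤

/-- Jensen–Shannon divergence:
`D_JS(P ‖ Q) = (1/2) D_KL(P ‖ M) + (1/2) D_KL(Q ‖ M)` with `M = (1/2)(P + Q)`. -/
noncomputable def jsDiv {α : Type*} [MeasurableSpace α] (P Q : Measure α) : ℝ≥0∞ :=
  2⁻¹ * klDiv P ((2 : ℝ≥0∞)⁻¹ • (P + Q)) + 2⁻¹ * klDiv Q ((2 : ℝ≥0∞)⁻¹ • (P + Q))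

/-- Expected error `ε_P(h) = E_{(x,y)∼P}[L(h(x), y)]` of a classifier `h : X → 𝓟`
under a distribution `P` on `X × Y`, for a loss `L : 𝓟 → Y → ℝ`. -/
noncomputable def expErr {X Y 𝓟 : Type*} [MeasurableSpace X] [MeasurableSpace Y]
    (L : 𝓟 → Y → ℝ) (P : Measure (X × Y)) (h : X → 𝓟) : ℝ :=
  ∫ z, L (h z.1) z.2 ∂P

section Anal
open Real

lemma hasDerivF (x : ℝ) (hx0 : 0 < x) (hx2 : x < 2) :
    HasDerivAt (fun y : ℝ => y * log y + (2 - y) * log (2 - y) - (y - 1)^2)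
      (log x - log (2 - x) - 2*(x-1)) x := by
  have h2 : (0:ℝ) < 2 - x := by linarith
  have h1 : HasDerivAt (fun y : ℝ => y * log y) (log x + 1) x := by
    have : HasDerivAt (fun y : ℝ => y * log y) (1 * log x + x * x⁻¹) x :=
      (hasDerivAt_id' x).mul (Real.hasDerivAt_log hx0.ne')
    convert this using 1
    simp [id]
    field_simp
  have h2' : HasDerivAt (fun y : ℝ => (2 - y) * log (2 - y)) (-(log (2-x) + 1)) x := by
    have hin : HasDerivAt (fun y : ℝ => 2 - y) (-1) x := by
      simpa using (hasDerivAt_id x).const_sub (2:ℝ)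
    have base : HasDerivAt (fun t : ℝ => t * log t) (log (2-x) + 1) (2 - x) := by
      have : HasDerivAt (fun t : ℝ => t * log t) (1 * log (2-x) + (2-x) * (2-x)⁻¹) (2 - x) :=
        (hasDerivAt_id' (2-x)).mul (Real.hasDerivAt_log h2.ne')
      convert this using 1
      simp [id]
      field_simp
    have hlog := base.comp x hin
    exact hlog.congr_deriv (by ring)
  have h3 : HasDerivAt (fun y : ℝ => (y - 1)^2) (2*(x-1)) x := by
    have : HasDerivAt (fun y : ℝ => (y - 1)^2) (↑2 * (x - 1) ^ (2 - 1) * (1 - 0)) x :=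
      ((hasDerivAt_id' x).sub (hasDerivAt_const x (1:ℝ))).pow 2
    convert this using 1
    simp [id]
  have := (h1.add h2').sub h3
  exact this.congr_deriv (by ring)

lemma hasDerivG (x : ℝ) (hx0 : 0 < x) (hx2 : x < 2) :
    HasDerivAt (fun y : ℝ => log y - log (2 - y) - 2*(y-1))
      (x⁻¹ + (2-x)⁻¹ - 2) x := by
  have h2 : (0:ℝ) < 2 - x := by linarith
  have hin : HasDerivAt (fun y : ℝ => 2 - y) (-1) x := by
    simpa using (hasDerivAt_id x).const_sub (2:ℝ)
  have hlog2 : HasDerivAt (fun y : ℝ => log (2 - y)) ((2-x)⁻¹ * (-1)) x :=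
    (Real.hasDerivAt_log h2.ne').comp x hin
  have hlin : HasDerivAt (fun y : ℝ => 2*(y-1)) 2 x := by
    have : HasDerivAt (fun y : ℝ => 2*(y-1)) (2 * (1 - 0)) x :=
      ((hasDerivAt_id' x).sub (hasDerivAt_const x (1:ℝ))).const_mul (2:ℝ)
    convert this using 1
    simp [id]
  have := ((Real.hasDerivAt_log hx0.ne').sub hlog2).sub hlin
  exact this.congr_deriv (by ring)

lemma G_nonneg {x : ℝ} (h1 : 1 ≤ x) (h2 : x < 2) :
    0 ≤ log x - log (2 - x) - 2*(x-1) := by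
  have hmono : MonotoneOn (fun y : ℝ => log y - log (2 - y) - 2*(y-1)) (Set.Icc 1 x) := by
    apply monotoneOn_of_deriv_nonneg (convex_Icc 1 x)
    · intro y hy
      have hy0 : 0 < y := lt_of_lt_of_le one_pos hy.1
      have hy2 : y < 2 := lt_of_le_of_lt hy.2 h2
      exact (hasDerivG y hy0 hy2).continuousAt.continuousWithinAt
    · intro y hy
      rw [interior_Icc] at hy
      have hy0 : 0 < y := lt_trans one_pos hy.1
      have hy2 : y < 2 := lt_trans hy.2 h2
      exact ((hasDerivG y hy0 hy2).differentiableAt.differentiableWithinAt)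
    · intro y hy
      rw [interior_Icc] at hy
      have hy0 : 0 < y := lt_trans one_pos hy.1
      have hy2 : y < 2 := lt_trans hy.2 h2
      rw [(hasDerivG y hy0 hy2).deriv]
      have hpos : 0 < y * (2 - y) := by nlinarith
      have heq : y⁻¹ + (2-y)⁻¹ - 2 = 2*(y-1)^2 / (y*(2-y)) := by
        field_simp [hy0.ne', (show (2:ℝ)-y ≠ 0 by linarith)]
        ring
      rw [heq]
      positivity
  have h := hmono (Set.left_mem_Icc.mpr h1) (Set.right_mem_Icc.mpr h1) h1
  simp only [Real.log_one] at h
  norm_num at h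
  linarith

lemma pointwise_key {u : ℝ} (h0 : 0 ≤ u) (h2 : u ≤ 2) :
    (u - 1)^2 ≤ u * log u + (2 - u) * log (2 - u) := by
  have main : ∀ w : ℝ, 1 ≤ w → w ≤ 2 → (w - 1)^2 ≤ w * log w + (2 - w) * log (2 - w) := by
    intro w hw1 hw2
    rcases eq_or_lt_of_le hw2 with rfl | hw2'
    · norm_num
      nlinarith [Real.log_two_gt_d9]
    · have hmono : MonotoneOn
          (fun y : ℝ => y * log y + (2 - y) * log (2 - y) - (y - 1)^2) (Set.Icc 1 w) := by
        apply monotoneOn_of_deriv_nonneg (convex_Icc 1 w)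
        · intro y hy
          have hy0 : 0 < y := lt_of_lt_of_le one_pos hy.1
          have hy2 : y < 2 := lt_of_le_of_lt hy.2 hw2'
          exact (hasDerivF y hy0 hy2).continuousAt.continuousWithinAt
        · intro y hy
          rw [interior_Icc] at hy
          have hy0 : 0 < y := lt_trans one_pos hy.1
          have hy2 : y < 2 := lt_trans hy.2 hw2'
          exact (hasDerivF y hy0 hy2).differentiableAt.differentiableWithinAt
        · intro y hy
          rw [interior_Icc] at hy
          have hy0 : 0 < y := lt_trans one_pos hy.1
          have hy2 : y < 2 := lt_trans hy.2 hw2'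
          rw [(hasDerivF y hy0 hy2).deriv]
          exact G_nonneg (le_of_lt hy.1) hy2
      have h := hmono (Set.left_mem_Icc.mpr hw1) (Set.right_mem_Icc.mpr hw1) hw1
      simp only [Real.log_one] at h
      norm_num at h
      linarith
  rcases le_total 1 u with h | h
  · exact main u h h2
  · have h' := main (2 - u) (by linarith) (by linarith)
    have e : (2 : ℝ) - (2 - u) = u := by ring
    rw [e] at h'
    nlinarith [h']

lemma abs_mul_log_le_two {t : ℝ} (h0 : 0 ≤ t) (h2 : t ≤ 2) : |t * log t| ≤ 2 := by
  rcases h0.eq_or_lt with rfl | hpos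
  · simp
  · have hub : log t ≤ t - 1 := Real.log_le_sub_one_of_pos hpos
    have hlb : 1 - t⁻¹ ≤ log t := by
      have := Real.log_le_sub_one_of_pos (inv_pos.mpr hpos)
      rw [Real.log_inv] at this
      linarith
    rw [abs_le]
    constructor
    · have : t * (1 - t⁻¹) ≤ t * log t := mul_le_mul_of_nonneg_left hlb hpos.le
      have ht : t * (1 - t⁻¹) = t - 1 := by field_simp
      nlinarith
    · have : t * log t ≤ t * (t - 1) := mul_le_mul_of_nonneg_left hub hpos.le
      nlinarith

end Anal

/-- **Lemma 1.** For probability measures `P`, `Q` on `X × Y` and a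
classifier `h` whose loss is bounded in `[0, C]`:
`ε_P(h) ≤ ε_Q(h) + √2 · C · (D_JS(P ‖ Q))^{1/2}`. -/
theorem expErr_le_expErr_add_sqrt_jsDiv
    {X Y 𝓟 : Type*} [MeasurableSpace X] [MeasurableSpace Y]
    (P Q : Measure (X × Y)) [IsProbabilityMeasure P] [IsProbabilityMeasure Q]
    (L : 𝓟 → Y → ℝ) (C : ℝ) (hC : 0 < C) (h : X → 𝓟)
    (hmeas : Measurable fun z : X × Y => L (h z.1) z.2)
    (hL0 : ∀ x y, 0 ≤ L (h x) y) (hLC : ∀ x y, L (h x) y ≤ C) :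
    expErr L P h ≤ expErr L Q h + Real.sqrt 2 * C * Real.sqrt (jsDiv P Q).toReal := by
  set M : Measure (X × Y) := (2 : ℝ≥0∞)⁻¹ • (P + Q) with hM
  have hMuniv : M Set.univ = 1 := by
    rw [hM]
    simp only [Measure.smul_apply, Measure.add_apply, measure_univ, smul_eq_mul]
    rw [one_add_one_eq_two, ENNReal.inv_mul_cancel (by norm_num) (by norm_num)]
  haveI : IsProbabilityMeasure M := ⟨hMuniv⟩
  have h2M : (2 : ℝ≥0∞) • M = P + Q := by
    rw [hM, smul_smul, ENNReal.mul_inv_cancel (by norm_num) (by norm_num), one_smul]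
  have hPQM : P + Q ≪ M := by
    intro s hs
    rw [← h2M]
    simp [Measure.smul_apply, hs]
  have hPM : P ≪ M := (Measure.absolutelyContinuous_of_le (Measure.le_add_right le_rfl)).trans hPQM
  have hQM : Q ≪ M := (Measure.absolutelyContinuous_of_le (Measure.le_add_left le_rfl)).trans hPQM
  -- a.e. facts
  have hsum : ∀ᵐ x ∂M, (P.rnDeriv M x).toReal + (Q.rnDeriv M x).toReal = 2 ∧
      (P.rnDeriv M x).toReal ≤ 2 ∧ (Q.rnDeriv M x).toReal ≤ 2 := by
    have h1 := Measure.rnDeriv_add' P Q M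
    have h2 := Measure.rnDeriv_smul_left_of_ne_top' M M (r := 2) (by norm_num)
    have h3 := Measure.rnDeriv_self M
    filter_upwards [h1, h2, h3, Measure.rnDeriv_lt_top P M, Measure.rnDeriv_lt_top Q M]
      with x e1 e2 e3 hPf hQf
    rw [← h2M] at e1
    rw [e2] at e1
    simp only [Pi.smul_apply, Pi.add_apply, e3, smul_eq_mul, mul_one] at e1
    have key : (P.rnDeriv M x).toReal + (Q.rnDeriv M x).toReal = 2 := by
      have := congrArg ENNReal.toReal e1
      rw [ENNReal.toReal_add hPf.ne hQf.ne] at this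
      simpa using this.symm
    refine ⟨key, by nlinarith [ENNReal.toReal_nonneg (a := Q.rnDeriv M x)],
      by nlinarith [ENNReal.toReal_nonneg (a := P.rnDeriv M x)]⟩
  -- measurability
  have mu : Measurable fun x => (P.rnDeriv M x).toReal :=
    (Measure.measurable_rnDeriv P M).ennreal_toReal
  have mv : Measurable fun x => (Q.rnDeriv M x).toReal :=
    (Measure.measurable_rnDeriv Q M).ennreal_toReal
  -- integrabilities
  have bound : ∀ (f : X × Y → ℝ) (c : ℝ), Measurable f → (∀ᵐ x ∂M, ‖f x‖ ≤ c) →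
      Integrable f M := fun f c hf hb => (integrable_const c).mono' hf.aestronglyMeasurable hb
  have iu : Integrable (fun x => (P.rnDeriv M x).toReal) M := by
    refine bound _ 2 mu ?_
    filter_upwards [hsum] with x hx
    rw [Real.norm_eq_abs, abs_of_nonneg ENNReal.toReal_nonneg]
    exact hx.2.1
  have iabs : Integrable (fun x => |(P.rnDeriv M x).toReal - 1|) M := by
    refine bound _ 1 (mu.sub measurable_const).abs ?_
    filter_upwards [hsum] with x hx
    rw [Real.norm_eq_abs, abs_abs, abs_le]
    constructor
    · nlinarith [ENNReal.toReal_nonneg (a := P.rnDeriv M x)]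
    · nlinarith [hx.2.1]
  have isq : Integrable (fun x => ((P.rnDeriv M x).toReal - 1)^2) M := by
    refine bound _ 1 ((mu.sub measurable_const).pow measurable_const) ?_
    filter_upwards [hsum] with x hx
    rw [Real.norm_eq_abs, abs_of_nonneg (sq_nonneg _)]
    nlinarith [ENNReal.toReal_nonneg (a := P.rnDeriv M x), hx.2.1]
  have iul : Integrable (fun x => (P.rnDeriv M x).toReal * Real.log (P.rnDeriv M x).toReal) M := by
    refine bound _ 2 (mu.mul mu.log) ?_
    filter_upwards [hsum] with x hx
    rw [Real.norm_eq_abs]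
    exact abs_mul_log_le_two ENNReal.toReal_nonneg hx.2.1
  have ivl : Integrable (fun x => (Q.rnDeriv M x).toReal * Real.log (Q.rnDeriv M x).toReal) M := by
    refine bound _ 2 (mv.mul mv.log) ?_
    filter_upwards [hsum] with x hx
    rw [Real.norm_eq_abs]
    exact abs_mul_log_le_two ENNReal.toReal_nonneg hx.2.2
  have iug : Integrable (fun x => (P.rnDeriv M x).toReal * L (h x.1) x.2) M := by
    refine bound _ (2*C) (mu.mul hmeas) ?_
    filter_upwards [hsum] with x hx
    rw [Real.norm_eq_abs, abs_of_nonneg (mul_nonneg ENNReal.toReal_nonneg (hL0 x.1 x.2))]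
    nlinarith [ENNReal.toReal_nonneg (a := P.rnDeriv M x), hL0 x.1 x.2, hLC x.1 x.2, hx.2.1]
  have ivg : Integrable (fun x => (Q.rnDeriv M x).toReal * L (h x.1) x.2) M := by
    refine bound _ (2*C) (mv.mul hmeas) ?_
    filter_upwards [hsum] with x hx
    rw [Real.norm_eq_abs, abs_of_nonneg (mul_nonneg ENNReal.toReal_nonneg (hL0 x.1 x.2))]
    nlinarith [ENNReal.toReal_nonneg (a := Q.rnDeriv M x), hL0 x.1 x.2, hLC x.1 x.2, hx.2.2]
  -- KL divergences
  have hIlP : Integrable (llr P M) P := by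
    rw [← integrable_rnDeriv_smul_iff hPM]
    simpa only [llr_def, smul_eq_mul] using iul
  have hIlQ : Integrable (llr Q M) Q := by
    rw [← integrable_rnDeriv_smul_iff hQM]
    simpa only [llr_def, smul_eq_mul] using ivl
  have hK1 : klDiv P M = ENNReal.ofReal
      (∫ x, (P.rnDeriv M x).toReal * Real.log (P.rnDeriv M x).toReal ∂M) := by
    simp only [klDiv]
    rw [if_pos (⟨hPM, hIlP⟩ : P ≪ M ∧ Integrable (llr P M) P)]
    congr 1
    rw [← integral_rnDeriv_smul hPM (f := llr P M)]
    simp only [llr_def, smul_eq_mul]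
  have hK2 : klDiv Q M = ENNReal.ofReal
      (∫ x, (Q.rnDeriv M x).toReal * Real.log (Q.rnDeriv M x).toReal ∂M) := by
    simp only [klDiv]
    rw [if_pos (⟨hQM, hIlQ⟩ : Q ≪ M ∧ Integrable (llr Q M) Q)]
    congr 1
    rw [← integral_rnDeriv_smul hQM (f := llr Q M)]
    simp only [llr_def, smul_eq_mul]
  have hjs_eq : jsDiv P Q = 2⁻¹ * klDiv P M + 2⁻¹ * klDiv Q M := by
    rw [jsDiv, ← hM]
  have hjs_ge : (∫ x, (P.rnDeriv M x).toReal * Real.log (P.rnDeriv M x).toReal ∂M) +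
      (∫ x, (Q.rnDeriv M x).toReal * Real.log (Q.rnDeriv M x).toReal ∂M)
      ≤ 2 * (jsDiv P Q).toReal := by
    rw [hjs_eq, hK1, hK2, ENNReal.toReal_add
        (ENNReal.mul_ne_top (by norm_num) ENNReal.ofReal_ne_top)
        (ENNReal.mul_ne_top (by norm_num) ENNReal.ofReal_ne_top),
      ENNReal.toReal_mul, ENNReal.toReal_mul, ENNReal.toReal_ofReal', ENNReal.toReal_ofReal']
    simp only [ENNReal.toReal_inv, ENNReal.toReal_ofNat]
    have h1 := le_max_left (∫ x, (P.rnDeriv M x).toReal * Real.log (P.rnDeriv M x).toReal ∂M) 0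
    have h2 := le_max_left (∫ x, (Q.rnDeriv M x).toReal * Real.log (Q.rnDeriv M x).toReal ∂M) 0
    linarith
  -- integral of densities
  have hu_int1 : ∫ x, (P.rnDeriv M x).toReal ∂M = 1 := by
    rw [Measure.integral_toReal_rnDeriv hPM]
    simp
  -- Cauchy-Schwarz via variance trick
  have hCS : (∫ x, |(P.rnDeriv M x).toReal - 1| ∂M)^2
      ≤ ∫ x, ((P.rnDeriv M x).toReal - 1)^2 ∂M := by
    set T := ∫ x, |(P.rnDeriv M x).toReal - 1| ∂M with hT
    have hnn : 0 ≤ ∫ x, (|(P.rnDeriv M x).toReal - 1| - T)^2 ∂M :=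
      integral_nonneg fun x => sq_nonneg _
    have hexp : ∀ x : X × Y, (|(P.rnDeriv M x).toReal - 1| - T)^2
        = ((P.rnDeriv M x).toReal - 1)^2 - (2*T) * |(P.rnDeriv M x).toReal - 1| + T^2 := by
      intro x
      rw [sub_sq, sq_abs]
      ring
    have i2 : Integrable (fun x => (2*T) * |(P.rnDeriv M x).toReal - 1|) M :=
      iabs.const_mul (2*T)
    have i1 : Integrable (fun x => ((P.rnDeriv M x).toReal - 1)^2
        - (2*T) * |(P.rnDeriv M x).toReal - 1|) M := isq.sub i2
    rw [integral_congr_ae (Filter.Eventually.of_forall hexp)] at hnn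
    rw [integral_add i1 (integrable_const _), integral_sub isq i2,
      integral_const_mul, integral_const] at hnn
    simp only [probReal_univ, one_smul] at hnn
    nlinarith [hnn]
  -- pointwise KL lower bound
  have hIK : (∫ x, ((P.rnDeriv M x).toReal - 1)^2 ∂M)
      ≤ (∫ x, (P.rnDeriv M x).toReal * Real.log (P.rnDeriv M x).toReal ∂M) +
        (∫ x, (Q.rnDeriv M x).toReal * Real.log (Q.rnDeriv M x).toReal ∂M) := by
    rw [← integral_add iul ivl]
    refine integral_mono_ae isq (iul.add ivl) ?_
    filter_upwards [hsum] with x hx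
    have hv : (Q.rnDeriv M x).toReal = 2 - (P.rnDeriv M x).toReal := by linarith [hx.1]
    rw [hv]
    exact pointwise_key ENNReal.toReal_nonneg hx.2.1
  -- error difference bound
  have hPg : expErr L P h = ∫ x, (P.rnDeriv M x).toReal * L (h x.1) x.2 ∂M := by
    rw [expErr, ← integral_rnDeriv_smul hPM (f := fun z : X × Y => L (h z.1) z.2)]
    simp only [smul_eq_mul]
  have hQg : expErr L Q h = ∫ x, (Q.rnDeriv M x).toReal * L (h x.1) x.2 ∂M := by
    rw [expErr, ← integral_rnDeriv_smul hQM (f := fun z : X × Y => L (h z.1) z.2)]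
    simp only [smul_eq_mul]
  have hmain : ∫ x, ((P.rnDeriv M x).toReal * L (h x.1) x.2
        - (Q.rnDeriv M x).toReal * L (h x.1) x.2) ∂M
      ≤ ∫ x, C * (((P.rnDeriv M x).toReal - 1) + |(P.rnDeriv M x).toReal - 1|) ∂M := by
    refine integral_mono_ae (iug.sub ivg) (((iu.sub (integrable_const 1)).add iabs).const_mul C) ?_
    filter_upwards [hsum] with x hx
    obtain ⟨hxy, hu2, hv2⟩ := hx
    have hg0 := hL0 x.1 x.2
    have hgC := hLC x.1 x.2
    rcases le_total 1 ((P.rnDeriv M x).toReal) with h1 | h1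
    · rw [abs_of_nonneg (by linarith)]
      nlinarith
    · rw [abs_of_nonpos (by linarith)]
      nlinarith
  have hrhs : ∫ x, C * (((P.rnDeriv M x).toReal - 1) + |(P.rnDeriv M x).toReal - 1|) ∂M
      = C * (∫ x, |(P.rnDeriv M x).toReal - 1| ∂M) := by
    have i3 : Integrable (fun x => (P.rnDeriv M x).toReal - 1) M := iu.sub (integrable_const 1)
    rw [integral_const_mul, integral_add i3 iabs,
      integral_sub iu (integrable_const 1), integral_const, hu_int1]
    simp
  -- assemble
  set T := ∫ x, |(P.rnDeriv M x).toReal - 1| ∂M with hT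
  have hTnn : 0 ≤ T := integral_nonneg fun x => abs_nonneg _
  have hdiff : expErr L P h - expErr L Q h ≤ C * T := by
    rw [hPg, hQg, ← integral_sub iug ivg]
    rw [hrhs] at hmain
    exact hmain
  have hT2 : T^2 ≤ 2 * (jsDiv P Q).toReal := le_trans hCS (le_trans hIK hjs_ge)
  have hTle : T ≤ Real.sqrt (2 * (jsDiv P Q).toReal) := by
    rw [Real.le_sqrt hTnn]
    · exact hT2
    · exact mul_nonneg (by norm_num) ENNReal.toReal_nonneg
  rw [Real.sqrt_mul (by norm_num : (0:ℝ) ≤ 2)] at hTle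
  have hfinal : C * T ≤ Real.sqrt 2 * C * Real.sqrt (jsDiv P Q).toReal := by
    have := mul_le_mul_of_nonneg_left hTle hC.le
    calc C * T ≤ C * (Real.sqrt 2 * Real.sqrt (jsDiv P Q).toReal) := this
    _ = Real.sqrt 2 * C * Real.sqrt (jsDiv P Q).toReal := by ring
  linarith
end

section
/- (Lemma 5.) Let P and Q be probability measures on X × Y, let H be a hypothesis class whose loss L is bounded by C > 0, and let h* ∈ H minimize the expected error ε_Q over H. Then for every ĥ ∈ H: ε_P(h*) ≤ ε_P(ĥ) + 2√2 · C · (D_JS(P ‖ Q))^{1/2}. -/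
open MeasureTheory
open scoped ENNReal

section AuxLemmas

open Real Set

private noncomputable def Fent (x : ℝ) : ℝ := x * log x + (2 - x) * log (2 - x) - (x - 1)^2
private noncomputable def Gent (x : ℝ) : ℝ := log x - log (2 - x) - 2*x + 2

private lemma hasDerivG_s7 {a : ℝ} (ha : a ∈ Ioo (0:ℝ) 2) :
    HasDerivAt Gent (a⁻¹ + (2 - a)⁻¹ - 2) a := by
  obtain ⟨h0, h2⟩ := ha
  have h1 : HasDerivAt Real.log a⁻¹ a := Real.hasDerivAt_log h0.ne'
  have h2' : HasDerivAt (fun x : ℝ => 2 - x) (-1) a := by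
    simpa using (hasDerivAt_id a).const_sub 2
  have h3 : HasDerivAt (fun x : ℝ => log (2 - x)) ((2-a)⁻¹ * (-1)) a :=
    (Real.hasDerivAt_log (by linarith)).comp a h2'
  have := ((h1.sub h3).sub ((hasDerivAt_id a).const_mul 2)).add_const 2
  exact this.congr_deriv (by ring)

private lemma hasDerivF_s7 {a : ℝ} (ha : a ∈ Ioo (0:ℝ) 2) :
    HasDerivAt Fent (Gent a) a := by
  obtain ⟨h0, h2⟩ := ha
  have h1 : HasDerivAt (fun x : ℝ => x * log x) (log a + 1) a := Real.hasDerivAt_mul_log h0.ne'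
  have h2' : HasDerivAt (fun x : ℝ => 2 - x) (-1) a := by
    simpa using (hasDerivAt_id a).const_sub 2
  have h3 : HasDerivAt (fun x : ℝ => (2 - x) * log (2 - x)) ((log (2-a) + 1) * (-1)) a :=
    (Real.hasDerivAt_mul_log (x := 2 - a) (by linarith)).comp a h2'
  have h4 : HasDerivAt (fun x : ℝ => (x - 1)^2) (2*(a-1)) a := by
    have := ((hasDerivAt_id a).sub_const 1).pow 2
    simp only [id] at this
    exact this.congr_deriv (by ring)
  have := (h1.add h3).sub h4
  exact this.congr_deriv (by unfold Gent; ring)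

private lemma G_mono : MonotoneOn Gent (Ioo (0:ℝ) 2) := by
  apply monotoneOn_of_deriv_nonneg (convex_Ioo 0 2)
  · exact fun x hx => ((hasDerivG_s7 hx).differentiableAt.continuousAt).continuousWithinAt
  · intro x hx
    rw [interior_Ioo] at hx
    exact (hasDerivG_s7 hx).differentiableAt.differentiableWithinAt
  · intro x hx
    rw [interior_Ioo] at hx
    rw [(hasDerivG_s7 hx).deriv]
    obtain ⟨h0, h2⟩ := hx
    have hx0 : x ≠ 0 := h0.ne'
    have hx2 : (2:ℝ) - x ≠ 0 := by linarith
    have hpos : 0 < x * (2 - x) := by nlinarith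
    have key : x⁻¹ + (2 - x)⁻¹ - 2 = 2*(x-1)^2 / (x*(2-x)) := by
      field_simp
      ring
    rw [key]
    exact div_nonneg (by positivity) hpos.le

private lemma G_one : Gent 1 = 0 := by norm_num [Gent]

private lemma F_one : Fent 1 = 0 := by norm_num [Fent]

private lemma F_cont : Continuous Fent := by
  unfold Fent
  have h1 : Continuous fun x : ℝ => x * log x := Real.continuous_mul_log
  have h2 : Continuous fun x : ℝ => (2 - x) * log (2 - x) :=
    h1.comp (continuous_const.sub continuous_id)
  continuity

private lemma key_ineq {x : ℝ} (hx : x ∈ Icc (0:ℝ) 2) :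
    (x - 1)^2 ≤ x * log x + (2 - x) * log (2 - x) := by
  have hF : 0 ≤ Fent x := by
    rcases le_total x 1 with h | h
    · have hanti : AntitoneOn Fent (Icc (0:ℝ) 1) := by
        apply antitoneOn_of_deriv_nonpos (convex_Icc 0 1) (F_cont.continuousOn)
        · intro y hy
          rw [interior_Icc] at hy
          have hy' : y ∈ Ioo (0:ℝ) 2 := ⟨hy.1, by linarith [hy.2]⟩
          exact (hasDerivF_s7 hy').differentiableAt.differentiableWithinAt
        intro y hy
        rw [interior_Icc] at hy
        have hy' : y ∈ Ioo (0:ℝ) 2 := ⟨hy.1, by linarith [hy.2]⟩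
        rw [(hasDerivF_s7 hy').deriv]
        have := G_mono hy' (by constructor <;> norm_num) (le_of_lt hy.2)
        rwa [G_one] at this
      have := hanti ⟨hx.1, h⟩ ⟨zero_le_one, le_refl 1⟩ h
      rwa [F_one] at this
    · have hmono : MonotoneOn Fent (Icc (1:ℝ) 2) := by
        apply monotoneOn_of_deriv_nonneg (convex_Icc 1 2) (F_cont.continuousOn)
        · intro y hy
          rw [interior_Icc] at hy
          have hy' : y ∈ Ioo (0:ℝ) 2 := ⟨by linarith [hy.1], hy.2⟩
          exact (hasDerivF_s7 hy').differentiableAt.differentiableWithinAt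
        intro y hy
        rw [interior_Icc] at hy
        have hy' : y ∈ Ioo (0:ℝ) 2 := ⟨by linarith [hy.1], hy.2⟩
        rw [(hasDerivF_s7 hy').deriv]
        have := G_mono (by constructor <;> norm_num) hy' (le_of_lt hy.1)
        rwa [G_one] at this
      have := hmono ⟨le_refl 1, by norm_num⟩ ⟨h, hx.2⟩ h
      rwa [F_one] at this
  unfold Fent at hF
  linarith

private lemma xlogx_abs_le {x : ℝ} (h0 : 0 ≤ x) (h2 : x ≤ 2) : |x * Real.log x| ≤ 2 := by
  rcases eq_or_lt_of_le h0 with h | hx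
  · simp [← h]
  rcases le_total x 1 with h1 | h1
  · have hlog : Real.log x ≤ 0 := Real.log_nonpos h0 h1
    have hinv : -Real.log x = Real.log x⁻¹ := (Real.log_inv x).symm
    have hb : Real.log x⁻¹ ≤ x⁻¹ - 1 := Real.log_le_sub_one_of_pos (by positivity)
    have hxb : x * (-Real.log x) ≤ x * (x⁻¹ - 1) := by
      rw [hinv]
      exact mul_le_mul_of_nonneg_left hb h0
    have hxi : x * (x⁻¹ - 1) = 1 - x := by field_simp
    rw [abs_of_nonpos (mul_nonpos_of_nonneg_of_nonpos h0 hlog)]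
    nlinarith
  · have hlog : 0 ≤ Real.log x := Real.log_nonneg h1
    have hb : Real.log x ≤ x - 1 := Real.log_le_sub_one_of_pos hx
    rw [abs_of_nonneg (mul_nonneg h0 hlog)]
    nlinarith

private lemma sub_one_le_xlogx {x : ℝ} (h0 : 0 ≤ x) : x - 1 ≤ x * Real.log x := by
  rcases eq_or_lt_of_le h0 with h | hx
  · simp [← h]
  have hb : Real.log x⁻¹ ≤ x⁻¹ - 1 := Real.log_le_sub_one_of_pos (by positivity)
  rw [Real.log_inv] at hb
  have := mul_le_mul_of_nonneg_left hb h0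
  have hxi : x * (x⁻¹ - 1) = 1 - x := by field_simp
  nlinarith

end AuxLemmas

/-- **Lemma 5.** If `hstar ∈ H` minimizes the expected error `ε_Q` over `H`,
then for every `hhat ∈ H`:
`ε_P(hstar) ≤ ε_P(hhat) + 2√2 · C · (D_JS(P ‖ Q))^{1/2}`. -/
theorem expErr_min_le_expErr_add_jsDiv_bound
    {X Y 𝓟 : Type*} [MeasurableSpace X] [MeasurableSpace Y]
    (P Q : Measure (X × Y)) [IsProbabilityMeasure P] [IsProbabilityMeasure Q]
    (H : Set (X → 𝓟)) (L : 𝓟 → Y → ℝ) (C : ℝ) (hC : 0 < C)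
    (hmeas : ∀ h ∈ H, Measurable fun z : X × Y => L (h z.1) z.2)
    (hL0 : ∀ p y, 0 ≤ L p y) (hLC : ∀ p y, L p y ≤ C)
    (hstar : X → 𝓟) (hstarH : hstar ∈ H)
    (hstarMin : ∀ h ∈ H, expErr L Q hstar ≤ expErr L Q h)
    (hhat : X → 𝓟) (hhatH : hhat ∈ H) :
    expErr L P hstar ≤ expErr L P hhat
      + 2 * Real.sqrt 2 * C * Real.sqrt (jsDiv P Q).toReal := by
  set M : Measure (X × Y) := (2 : ℝ≥0∞)⁻¹ • (P + Q) with hMdef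
  haveI : IsProbabilityMeasure M := by
    constructor
    rw [hMdef]
    simp [Measure.smul_apply, Measure.add_apply, measure_univ]
    rw [ENNReal.inv_two_add_inv_two]
  have hPM : P ≪ M := by
    refine Measure.AbsolutelyContinuous.mk (fun s hs h0 => ?_)
    rw [hMdef] at h0
    simp only [Measure.smul_apply, Measure.add_apply, smul_eq_mul] at h0
    rcases mul_eq_zero.mp h0 with h | h
    · norm_num at h
    · exact (add_eq_zero.mp h).1
  have hQM : Q ≪ M := by
    refine Measure.AbsolutelyContinuous.mk (fun s hs h0 => ?_)
    rw [hMdef] at h0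
    simp only [Measure.smul_apply, Measure.add_apply, smul_eq_mul] at h0
    rcases mul_eq_zero.mp h0 with h | h
    · norm_num at h
    · exact (add_eq_zero.mp h).2
  set φ : X × Y → ℝ := fun z => (P.rnDeriv M z).toReal with hφdef
  set γ : X × Y → ℝ := fun z => (Q.rnDeriv M z).toReal with hγdef
  have hmeasφ : Measurable φ := (Measure.measurable_rnDeriv P M).ennreal_toReal
  have hmeasγ : Measurable γ := (Measure.measurable_rnDeriv Q M).ennreal_toReal
  have hfg : P.rnDeriv M + Q.rnDeriv M =ᵐ[M] fun _ => (2:ℝ≥0∞) := by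
    have h1 : (P + Q).rnDeriv M =ᵐ[M] P.rnDeriv M + Q.rnDeriv M := Measure.rnDeriv_add' P Q M
    have h2 : P + Q = (2:ℝ≥0∞) • M := by
      rw [hMdef, smul_smul, ENNReal.mul_inv_cancel] <;> norm_num
    have h3 : ((2:ℝ≥0∞) • M).rnDeriv M =ᵐ[M] (2:ℝ≥0∞) • M.rnDeriv M :=
      Measure.rnDeriv_smul_left_of_ne_top M M (by norm_num)
    have h4 : M.rnDeriv M =ᵐ[M] fun _ => 1 := Measure.rnDeriv_self M
    filter_upwards [h1, h2 ▸ h3, h4] with x e1 e3 e4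
    rw [← e1, e3, Pi.smul_apply, e4, smul_eq_mul, mul_one]
  have hae : ∀ᵐ z ∂M, 0 ≤ φ z ∧ φ z ≤ 2 ∧ γ z = 2 - φ z := by
    filter_upwards [hfg, Measure.rnDeriv_lt_top P M, Measure.rnDeriv_lt_top Q M]
      with z e hfz hgz
    simp only [Pi.add_apply] at e
    have e' : φ z + γ z = 2 := by
      have := congrArg ENNReal.toReal e
      rwa [ENNReal.toReal_add hfz.ne hgz.ne, ENNReal.toReal_ofNat] at this
    have hγ0 : (0:ℝ) ≤ γ z := ENNReal.toReal_nonneg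
    exact ⟨ENNReal.toReal_nonneg, by linarith, by linarith⟩
  -- integrability and basic integrals
  have intφ : Integrable φ M := by
    refine Integrable.mono' (integrable_const (2:ℝ)) hmeasφ.aestronglyMeasurable ?_
    filter_upwards [hae] with z hz
    rw [Real.norm_eq_abs, abs_of_nonneg hz.1]; exact hz.2.1
  have intγ : Integrable γ M := by
    refine Integrable.mono' (integrable_const (2:ℝ)) hmeasγ.aestronglyMeasurable ?_
    filter_upwards [hae] with z hz
    have hγz2 : γ z ≤ 2 := by rw [hz.2.2]; linarith [hz.1]
    rw [Real.norm_eq_abs, abs_of_nonneg (ENNReal.toReal_nonneg : (0:ℝ) ≤ γ z)]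
    exact hγz2
  have hφint : ∫ z, φ z ∂M = 1 := by
    rw [hφdef, Measure.integral_toReal_rnDeriv hPM, probReal_univ]
  have intφ1 : Integrable (fun z => φ z - 1) M := intφ.sub (integrable_const 1)
  have hφ1 : ∫ z, (φ z - 1) ∂M = 0 := by
    rw [integral_sub intφ (integrable_const 1), hφint, integral_const]
    simp
  have intT : Integrable (fun z => |φ z - 1|) M := intφ1.abs
  set T : ℝ := ∫ z, |φ z - 1| ∂M with hTdef
  have hT0 : 0 ≤ T := integral_nonneg fun z => abs_nonneg _
  -- error difference bound
  have errDiff : ∀ h ∈ H, expErr L P h - expErr L Q h ≤ C * T ∧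
      expErr L Q h - expErr L P h ≤ C * T := by
    intro h hH
    set k : X × Y → ℝ := fun z => L (h z.1) z.2 with hkdef
    have hk : Measurable k := hmeas h hH
    have hkb : ∀ z, 0 ≤ k z ∧ k z ≤ C := fun z => ⟨hL0 _ _, hLC _ _⟩
    have hkP : Integrable k P := by
      refine Integrable.mono' (integrable_const C) hk.aestronglyMeasurable ?_
      filter_upwards with z
      rw [Real.norm_eq_abs, abs_of_nonneg (hkb z).1]; exact (hkb z).2
    have hkQ : Integrable k Q := by
      refine Integrable.mono' (integrable_const C) hk.aestronglyMeasurable ?_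
      filter_upwards with z
      rw [Real.norm_eq_abs, abs_of_nonneg (hkb z).1]; exact (hkb z).2
    have hP : ∫ z, φ z * k z ∂M = expErr L P h := by
      rw [expErr]
      simpa [smul_eq_mul] using integral_rnDeriv_smul (f := k) hPM
    have hQ : ∫ z, γ z * k z ∂M = expErr L Q h := by
      rw [expErr]
      simpa [smul_eq_mul] using integral_rnDeriv_smul (f := k) hQM
    have intφk : Integrable (fun z => φ z * k z) M := by
      simpa [smul_eq_mul] using (integrable_rnDeriv_smul_iff hPM).mpr hkP
    have intγk : Integrable (fun z => γ z * k z) M := by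
      simpa [smul_eq_mul] using (integrable_rnDeriv_smul_iff hQM).mpr hkQ
    constructor
    · have hmono : ∫ z, (φ z * k z - γ z * k z) ∂M ≤
          ∫ z, C * (|φ z - 1| + (φ z - 1)) ∂M := by
        apply integral_mono_ae (intφk.sub intγk) ((intT.add intφ1).const_mul C)
        filter_upwards [hae] with z hz
        obtain ⟨hkz0, hkzC⟩ := hkb z
        show φ z * k z - γ z * k z ≤ C * (|φ z - 1| + (φ z - 1))
        rw [hz.2.2]
        rcases le_total 1 (φ z) with h1 | h1
        · rw [abs_of_nonneg (by linarith)]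
          nlinarith
        · rw [abs_of_nonpos (by linarith)]
          nlinarith
      rw [integral_sub intφk intγk, hP, hQ] at hmono
      rwa [integral_const_mul, integral_add intT intφ1, hφ1, add_zero, ← hTdef] at hmono
    · have hmono : ∫ z, (γ z * k z - φ z * k z) ∂M ≤
          ∫ z, C * (|φ z - 1| - (φ z - 1)) ∂M := by
        apply integral_mono_ae (intγk.sub intφk) ((intT.sub intφ1).const_mul C)
        filter_upwards [hae] with z hz
        obtain ⟨hkz0, hkzC⟩ := hkb z
        show γ z * k z - φ z * k z ≤ C * (|φ z - 1| - (φ z - 1))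
        rw [hz.2.2]
        rcases le_total 1 (φ z) with h1 | h1
        · rw [abs_of_nonneg (by linarith)]
          nlinarith
        · rw [abs_of_nonpos (by linarith)]
          nlinarith
      rw [integral_sub intγk intφk, hP, hQ] at hmono
      rwa [integral_const_mul, integral_sub intT intφ1, hφ1, sub_zero, ← hTdef] at hmono
  -- KL divergences
  have intφlogφ : Integrable (fun z => φ z * Real.log (φ z)) M := by
    refine Integrable.mono' (integrable_const (2:ℝ))
      (hmeasφ.mul (Real.measurable_log.comp hmeasφ)).aestronglyMeasurable ?_
    filter_upwards [hae] with z hz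
    rw [Real.norm_eq_abs]
    exact xlogx_abs_le hz.1 hz.2.1
  have intγlogγ : Integrable (fun z => γ z * Real.log (γ z)) M := by
    refine Integrable.mono' (integrable_const (2:ℝ))
      (hmeasγ.mul (Real.measurable_log.comp hmeasγ)).aestronglyMeasurable ?_
    filter_upwards [hae] with z hz
    have hγz0 : 0 ≤ γ z := by rw [hz.2.2]; linarith [hz.2.1]
    have hγz2 : γ z ≤ 2 := by rw [hz.2.2]; linarith [hz.1]
    rw [Real.norm_eq_abs]
    exact xlogx_abs_le hγz0 hγz2
  have intllrP : Integrable (llr P M) P := by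
    rw [← integrable_rnDeriv_smul_iff hPM]
    simp only [smul_eq_mul, llr_def]
    exact intφlogφ
  have intllrQ : Integrable (llr Q M) Q := by
    rw [← integrable_rnDeriv_smul_iff hQM]
    simp only [smul_eq_mul, llr_def]
    exact intγlogγ
  set A : ℝ := ∫ z, llr P M z ∂P with hAdef
  set B : ℝ := ∫ z, llr Q M z ∂Q with hBdef
  have hA : A = ∫ z, φ z * Real.log (φ z) ∂M := by
    rw [hAdef, ← integral_rnDeriv_smul (f := llr P M) hPM]
    simp only [smul_eq_mul, llr_def]
    rfl
  have hB : B = ∫ z, γ z * Real.log (γ z) ∂M := by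
    rw [hBdef, ← integral_rnDeriv_smul (f := llr Q M) hQM]
    simp only [smul_eq_mul, llr_def]
    rfl
  have hA0 : 0 ≤ A := by
    rw [hA]
    have hm : ∫ z, (φ z - 1) ∂M ≤ ∫ z, φ z * Real.log (φ z) ∂M := by
      apply integral_mono_ae intφ1 intφlogφ
      filter_upwards [hae] with z hz
      exact sub_one_le_xlogx hz.1
    linarith [hφ1]
  have hγ1 : ∫ z, (γ z - 1) ∂M = 0 := by
    rw [integral_sub intγ (integrable_const 1), hγdef,
      Measure.integral_toReal_rnDeriv hQM, probReal_univ, integral_const]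
    simp
  have hB0 : 0 ≤ B := by
    rw [hB]
    have hm : ∫ z, (γ z - 1) ∂M ≤ ∫ z, γ z * Real.log (γ z) ∂M := by
      apply integral_mono_ae (intγ.sub (integrable_const 1)) intγlogγ
      filter_upwards [hae] with z hz
      have hγz0 : 0 ≤ γ z := by rw [hz.2.2]; linarith [hz.2.1]
      exact sub_one_le_xlogx hγz0
    linarith [hγ1]
  have hKLP : klDiv P M = ENNReal.ofReal A := by
    rw [klDiv, if_pos ⟨hPM, intllrP⟩]
  have hKLQ : klDiv Q M = ENNReal.ofReal B := by
    rw [klDiv, if_pos ⟨hQM, intllrQ⟩]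
  have hjseq : jsDiv P Q = 2⁻¹ * klDiv P M + 2⁻¹ * klDiv Q M := rfl
  have hjsT : (jsDiv P Q).toReal = 2⁻¹ * A + 2⁻¹ * B := by
    rw [hjseq, hKLP, hKLQ, ENNReal.toReal_add (by finiteness) (by finiteness),
      ENNReal.toReal_mul, ENNReal.toReal_mul, ENNReal.toReal_ofReal hA0,
      ENNReal.toReal_ofReal hB0]
    norm_num
  -- Pinsker-type inequality
  have intsq : Integrable (fun z => (φ z - 1)^2) M := by
    refine Integrable.mono' (integrable_const (1:ℝ))
      ((hmeasφ.sub measurable_const).pow_const 2).aestronglyMeasurable ?_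
    filter_upwards [hae] with z hz
    rw [Real.norm_eq_abs, abs_of_nonneg (sq_nonneg _)]
    nlinarith [hz.1, hz.2.1]
  have hsqle : ∫ z, (φ z - 1)^2 ∂M ≤ A + B := by
    rw [hA, hB, ← integral_add intφlogφ intγlogγ]
    apply integral_mono_ae intsq (intφlogφ.add intγlogγ)
    filter_upwards [hae] with z hz
    show (φ z - 1)^2 ≤ φ z * Real.log (φ z) + γ z * Real.log (γ z)
    rw [hz.2.2]
    exact key_ineq ⟨hz.1, hz.2.1⟩
  have hT2 : T^2 ≤ ∫ z, (φ z - 1)^2 ∂M := by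
    have hnn : 0 ≤ ∫ z, (|φ z - 1| - T)^2 ∂M := integral_nonneg fun z => sq_nonneg _
    have hexp : ∫ z, (|φ z - 1| - T)^2 ∂M
        = ∫ z, (φ z - 1)^2 ∂M - 2*T*T + T^2 := by
      have heq : (fun z => (|φ z - 1| - T)^2)
          = fun z => ((φ z - 1)^2 - 2*T*|φ z - 1|) + T^2 := by
        funext z
        rw [sub_sq, sq_abs]
        ring
      have i1 : Integrable (fun z => (φ z - 1)^2 - 2*T*|φ z - 1|) M := by
        exact intsq.sub (intT.const_mul (2*T))
      have i2 : Integrable (fun z : X × Y => 2*T*|φ z - 1|) M := intT.const_mul (2*T)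
      rw [heq, integral_add i1 (integrable_const _),
        integral_sub intsq i2, integral_const_mul, integral_const]
      simp [← hTdef]
    linarith
  -- conclusion
  have hjs2 : T^2/2 ≤ (jsDiv P Q).toReal := by
    rw [hjsT]; linarith
  have hsqrt2 : (0:ℝ) < Real.sqrt 2 := Real.sqrt_pos.mpr (by norm_num)
  have hsq3 : Real.sqrt (T^2/2) = T / Real.sqrt 2 := by
    rw [show T^2/2 = (T/Real.sqrt 2)^2 by
        rw [div_pow, Real.sq_sqrt (by norm_num : (0:ℝ) ≤ 2)],
      Real.sqrt_sq (by positivity)]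
  have hTle : T ≤ Real.sqrt 2 * Real.sqrt (jsDiv P Q).toReal := by
    have h2 : Real.sqrt (T^2/2) ≤ Real.sqrt (jsDiv P Q).toReal := Real.sqrt_le_sqrt hjs2
    rw [hsq3] at h2
    calc T = Real.sqrt 2 * (T / Real.sqrt 2) := by field_simp
    _ ≤ Real.sqrt 2 * Real.sqrt (jsDiv P Q).toReal :=
        mul_le_mul_of_nonneg_left h2 hsqrt2.le
  have hfinal : 2*C*T ≤ 2 * Real.sqrt 2 * C * Real.sqrt (jsDiv P Q).toReal := by
    have := mul_le_mul_of_nonneg_left hTle (by positivity : (0:ℝ) ≤ 2*C)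
    calc 2*C*T ≤ 2*C*(Real.sqrt 2 * Real.sqrt (jsDiv P Q).toReal) := this
    _ = 2 * Real.sqrt 2 * C * Real.sqrt (jsDiv P Q).toReal := by ring
  have e1 := (errDiff hstar hstarH).1
  have e2 := hstarMin hhat hhatH
  have e3 := (errDiff hhat hhatH).2
  linarith
end
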